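/- Let u : ℝ → ℝ be continuous with u(x) > 0 for all x, and let w ∈ ℝ. Let f, g : ℝ → ℝ be differentiable with f'(x) = u(x)·g(x) and g'(x) = u(x)·f(x) − w·g(x) for all x ∈ ℝ, and suppose there exists x₀ ∈ ℝ with f(x) > 0 and g(x) > 0 for all x ≤ x₀. If moreover f(x) → 1 as x → +∞, then f is strictly increasing on ℝ and f(x) < 1 for every x ∈ ℝ. -/

import Mathlib

open Filter

/-- Under the hypotheses of Statement 18, if moreover `f(x) → 1` as
`x → +∞`, then `f` is strictly increasing on `ℝ` and `f(x) < 1` for every `x`. -/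
theorem stmt_19 (u f g : ℝ → ℝ) (hu : Continuous u) (hupos : ∀ x, 0 < u x) (w : ℝ)
    (hf : ∀ x, HasDerivAt f (u x * g x) x)
    (hg : ∀ x, HasDerivAt g (u x * f x - w * g x) x)
    (x₀ : ℝ) (h0 : ∀ x ≤ x₀, 0 < f x ∧ 0 < g x)
    (hlim : Tendsto f atTop (nhds 1)) :
    StrictMono f ∧ ∀ x : ℝ, f x < 1 := by
  have hfc : Continuous f :=
    (Differentiable.continuous fun x => (hf x).differentiableAt)
  have hgc : Continuous g :=
    (Differentiable.continuous fun x => (hg x).differentiableAt)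
  -- auxiliary function h = g * exp(w x)
  set h : ℝ → ℝ := fun x => g x * Real.exp (w * x) with hh
  have hh' : ∀ x, HasDerivAt h (u x * f x * Real.exp (w * x)) x := by
    intro x
    have e1 : HasDerivAt (fun x : ℝ => Real.exp (w * x)) (Real.exp (w * x) * w) x := by
      simpa [mul_comm] using ((hasDerivAt_id x).const_mul w).exp
    have := (hg x).mul e1
    convert this using 1
    all_goals first | rfl | ring
  -- positivity everywhere
  have key : ∀ x, 0 < f x ∧ 0 < g x := by
    by_contra hcon
    push_neg at hcon
    set A : Set ℝ := {x | f x ≤ 0 ∨ g x ≤ 0} with hA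
    have hAne : A.Nonempty := by
      obtain ⟨x, hx⟩ := hcon
      rcases le_or_gt (f x) 0 with h1 | h1
      · exact ⟨x, Or.inl h1⟩
      · exact ⟨x, Or.inr (hx h1)⟩
    have hAclosed : IsClosed A := by
      have : A = f ⁻¹' Set.Iic 0 ∪ g ⁻¹' Set.Iic 0 := by
        ext x; simp [hA]
      rw [this]
      exact (isClosed_Iic.preimage hfc).union (isClosed_Iic.preimage hgc)
    have hAbdd : BddBelow A := by
      refine ⟨x₀, fun a ha => ?_⟩
      by_contra hax
      push_neg at hax
      obtain ⟨h1, h2⟩ := h0 a hax.le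
      rcases ha with ha | ha
      · exact absurd h1 (not_lt.mpr ha)
      · exact absurd h2 (not_lt.mpr ha)
    set m := sInf A with hm
    have hmA : m ∈ A := hAclosed.csInf_mem hAne hAbdd
    have hlt : ∀ x < m, 0 < f x ∧ 0 < g x := by
      intro x hx
      have hxA : x ∉ A := fun hxa => absurd (csInf_le hAbdd hxa) (not_le.mpr hx)
      simp only [hA, Set.mem_setOf_eq, not_or, not_le] at hxA
      exact hxA
    -- f is strictly monotone on Iic m
    have hfmono : StrictMonoOn f (Set.Iic m) := by
      apply strictMonoOn_of_deriv_pos (convex_Iic m) hfc.continuousOn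
      intro x hx
      rw [interior_Iic] at hx
      rw [(hf x).deriv]
      exact mul_pos (hupos x) (hlt x hx).2
    have hfm : 0 < f m := by
      have h1 : f (m - 1) < f m :=
        hfmono (by simp : m - 1 ∈ Set.Iic m) (by simp : m ∈ Set.Iic m) (by linarith)
      have h2 : 0 < f (m - 1) := (hlt (m - 1) (by linarith)).1
      linarith
    have hfpos : ∀ x ≤ m, 0 < f x := by
      intro x hx
      rcases hx.lt_or_eq with h | h
      · exact (hlt x h).1
      · rw [h]; exact hfm
    -- h is strictly monotone on Iic m
    have hhmono : StrictMonoOn h (Set.Iic m) := by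
      have hhc : Continuous h :=
        (Differentiable.continuous fun x => (hh' x).differentiableAt)
      apply strictMonoOn_of_deriv_pos (convex_Iic m) hhc.continuousOn
      intro x hx
      rw [interior_Iic] at hx
      rw [(hh' x).deriv]
      exact mul_pos (mul_pos (hupos x) (hfpos x hx.le)) (Real.exp_pos _)
    have hgm : 0 < g m := by
      have h1 : h (m - 1) < h m :=
        hhmono (by simp : m - 1 ∈ Set.Iic m) (by simp : m ∈ Set.Iic m) (by linarith)
      have h2 : 0 < h (m - 1) :=
        mul_pos (hlt (m - 1) (by linarith)).2 (Real.exp_pos _)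
      have h3 : 0 < h m := lt_trans h2 h1
      have := mul_pos h3 (Real.exp_pos (-(w * m)))
      simp only [hh] at this
      rw [mul_assoc, ← Real.exp_add] at this
      simpa using this
    rcases hmA with hc | hc
    · exact absurd hfm (not_lt.mpr hc)
    · exact absurd hgm (not_lt.mpr hc)
  have hsm : StrictMono f := by
    apply strictMono_of_deriv_pos
    intro x
    rw [(hf x).deriv]
    exact mul_pos (hupos x) (key x).2
  refine ⟨hsm, fun x => ?_⟩
  have h1 : f (x + 1) ≤ 1 := by
    apply ge_of_tendsto hlim
    filter_upwards [eventually_ge_atTop (x + 1)] with y hy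
    exact hsm.monotone hy
  have h2 : f x < f (x + 1) := hsm (by linarith)
  linarith
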